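/- Let S be a finite set, let p, q ∈ Σ_S, let α > 0, and let f : S → ℝ satisfy 0 ≤ f(s) ≤ b for all s ∈ S. If KL(p, q) ≤ α, then |pf − qf| ≤ √( 2 · Var_q(f) · α ) + (2/3) · b · α. -/

import Mathlib

open Finset

/-- Kullback–Leibler divergence between two finitely supported distributions, with the
conventions `0 · log(0/x) = 0` and `KL(p,q) = +∞` when `p(s) > 0` while `q(s) = 0`. -/
noncomputable def KLdiv {S : Type*} [Fintype S] (p q : S → ℝ) : EReal :=
  ∑ s, if p s = 0 then (0 : EReal)
    else if q s = 0 then (⊤ : EReal)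
    else ((p s * Real.log (p s / q s) : ℝ) : EReal)


lemma two_pow_le_factorial_succ (n : ℕ) : 2 ^ n ≤ (n + 1).factorial := by
  induction n with
  | zero => simp
  | succ k ih =>
    rw [pow_succ, Nat.factorial_succ]
    calc 2 ^ k * 2 ≤ (k + 1).factorial * 2 := Nat.mul_le_mul_right _ ih
      _ ≤ (k + 1 + 1) * (k + 1).factorial := by rw [mul_comm]; exact Nat.mul_le_mul_right _ (by omega)

lemma exp_le_quadratic_pos {x : ℝ} (h0 : 0 ≤ x) (h2 : x < 2) :
    Real.exp x ≤ 1 + x + x ^ 2 / (2 - x) := by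
  have hx2 : x / 2 < 1 := by linarith
  have hx2' : 0 ≤ x / 2 := by linarith
  have hexp : Real.exp x = ∑' n : ℕ, x ^ n / n.factorial := by
    rw [Real.exp_eq_exp_ℝ, NormedSpace.exp_eq_tsum_div]
  have hsum1 : Summable (fun n : ℕ => x ^ n / n.factorial) := Real.summable_pow_div_factorial x
  have hsumg : Summable (fun n : ℕ => 2 * (x / 2) ^ n) :=
    (summable_geometric_of_lt_one hx2' hx2).mul_left 2
  have hsumd : Summable (fun n : ℕ => if n = 0 then (-1 : ℝ) else 0) := by
    apply summable_of_ne_finset_zero (s := {0})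
    intro n hn
    simp only [Finset.mem_singleton] at hn
    simp [hn]
  have hsumG : Summable (fun n : ℕ => 2 * (x / 2) ^ n + (if n = 0 then (-1 : ℝ) else 0)) :=
    hsumg.add hsumd
  have hle : ∀ n : ℕ, x ^ n / n.factorial ≤ 2 * (x / 2) ^ n + (if n = 0 then (-1 : ℝ) else 0) := by
    intro n
    match n with
    | 0 => norm_num
    | 1 => norm_num [Nat.factorial]; linarith
    | (k + 2) =>
      rw [if_neg (by omega : ¬ k + 2 = 0), add_zero]
      have hfac : (2 : ℝ) ^ (k + 1) ≤ ((k + 2).factorial : ℝ) := by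
        exact_mod_cast two_pow_le_factorial_succ (k + 1)
      have heq : 2 * (x / 2) ^ (k + 2) = x ^ (k + 2) / 2 ^ (k + 1) := by
        rw [div_pow]; ring
      rw [heq]
      apply div_le_div_of_nonneg_left (pow_nonneg h0 _) (by positivity) hfac
  have hmain := Summable.tsum_le_tsum hle hsum1 hsumG
  rw [← hexp] at hmain
  have hG : ∑' n : ℕ, (2 * (x / 2) ^ n + (if n = 0 then (-1 : ℝ) else 0))
      = 2 * (1 - x / 2)⁻¹ + (-1) := by
    rw [Summable.tsum_add hsumg hsumd]
    congr 1
    · rw [tsum_mul_left, tsum_geometric_of_lt_one hx2' hx2]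
    · exact tsum_eq_single 0 (fun n hn => by simp [hn])
  rw [hG] at hmain
  have h2x : (2 : ℝ) - x ≠ 0 := by linarith
  have h1x : (1 : ℝ) - x / 2 ≠ 0 := by intro h; apply h2x; linarith
  have : 2 * (1 - x / 2)⁻¹ + (-1) = 1 + x + x ^ 2 / (2 - x) := by
    field_simp
    ring
  linarith

lemma exp_le_quadratic {x u : ℝ} (hxu : x ≤ u) (hu0 : 0 ≤ u) (hu2 : u < 2) :
    Real.exp x ≤ 1 + x + x ^ 2 / (2 - u) := by
  rcases le_or_gt x 0 with h | h
  · have h1 : Real.exp x ≤ 1 + x + x ^ 2 / 2 := by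
      have key : AntitoneOn (fun y : ℝ => 1 + y + y ^ 2 / 2 - Real.exp y) (Set.Iic 0) := by
        apply antitoneOn_of_deriv_nonpos (convex_Iic 0)
        · fun_prop
        · intro y _
          have : Differentiable ℝ (fun y : ℝ => 1 + y + y ^ 2 / 2 - Real.exp y) := by fun_prop
          exact this.differentiableOn y ‹_›
        · intro y _
          have hD : HasDerivAt (fun y : ℝ => 1 + y + y ^ 2 / 2 - Real.exp y)
              (1 + (2 * y ^ 1) / 2 - Real.exp y) y := by
            exact (((hasDerivAt_id y).const_add 1).add ((hasDerivAt_pow 2 y).div_const 2)).sub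
              (Real.hasDerivAt_exp y)
          rw [hD.deriv]
          have := Real.add_one_le_exp y
          simp only [pow_one]
          linarith
      have h := key (Set.mem_Iic.mpr h) (Set.mem_Iic.mpr le_rfl) h
      simp only [Real.exp_zero] at h
      linarith
    have h2 : x ^ 2 / 2 ≤ x ^ 2 / (2 - u) := by
      apply div_le_div_of_nonneg_left (sq_nonneg x) (by linarith) (by linarith)
    linarith
  · have h1 := exp_le_quadratic_pos h.le (lt_of_le_of_lt hxu hu2)
    have h2 : x ^ 2 / (2 - x) ≤ x ^ 2 / (2 - u) := by
      apply div_le_div_of_nonneg_left (sq_nonneg x) (by linarith) (by linarith)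
    linarith



lemma one_sided_bernstein {S : Type*} [Fintype S]
    (p q : S → ℝ) (hp : ∀ s, 0 ≤ p s) (hpsum : ∑ s, p s = 1)
    (hq : ∀ s, 0 ≤ q s) (hqsum : ∑ s, q s = 1)
    (hsupp : ∀ s, p s ≠ 0 → 0 < q s)
    (α : ℝ) (hα : 0 < α)
    (hKL : ∑ s, (if p s = 0 then 0 else p s * Real.log (p s / q s)) ≤ α)
    (b : ℝ) (hb : 0 ≤ b) (g : S → ℝ) (hgb : ∀ s, g s ≤ b)
    (hmean : ∑ s, q s * g s = 0) :
    ∑ s, p s * g s ≤ Real.sqrt (2 * (∑ s, q s * g s ^ 2) * α) + 2 / 3 * b * α := by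
  set V := ∑ s, q s * g s ^ 2 with hV
  have hV0 : 0 ≤ V := Finset.sum_nonneg fun s _ => mul_nonneg (hq s) (sq_nonneg _)
  have key : ∀ l : ℝ, 0 < l → l * b < 2 →
      l * (∑ s, p s * g s) ≤ α + l ^ 2 * V / (2 - l * b) := by
    intro l hl hlb
    have hlb0 : 0 ≤ l * b := mul_nonneg hl.le hb
    have hMGF : ∑ s, q s * Real.exp (l * g s) ≤ 1 + l ^ 2 * V / (2 - l * b) := by
      have hpt : ∀ s ∈ univ, q s * Real.exp (l * g s)
          ≤ q s * (1 + l * g s + (l * g s) ^ 2 / (2 - l * b)) := by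
        intro s _
        apply mul_le_mul_of_nonneg_left _ (hq s)
        exact exp_le_quadratic (mul_le_mul_of_nonneg_left (hgb s) hl.le) hlb0 hlb
      calc ∑ s, q s * Real.exp (l * g s)
          ≤ ∑ s, q s * (1 + l * g s + (l * g s) ^ 2 / (2 - l * b)) := Finset.sum_le_sum hpt
        _ = (∑ s, q s) + l * (∑ s, q s * g s) + (l ^ 2 / (2 - l * b)) * (∑ s, q s * g s ^ 2) := by
            rw [Finset.mul_sum, Finset.mul_sum, ← Finset.sum_add_distrib, ← Finset.sum_add_distrib]
            apply Finset.sum_congr rfl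
            intro s _
            field_simp
        _ = 1 + l ^ 2 * V / (2 - l * b) := by rw [hqsum, hmean, ← hV]; ring
    have hCM : l * (∑ s, p s * g s) - (∑ s, if p s = 0 then 0 else p s * Real.log (p s / q s))
        ≤ (∑ s, q s * Real.exp (l * g s)) - 1 := by
      conv_lhs => rw [Finset.mul_sum]
      rw [← Finset.sum_sub_distrib]
      have hRHS : (∑ s, q s * Real.exp (l * g s)) - 1
          = ∑ s, (q s * Real.exp (l * g s) - p s) := by
        rw [Finset.sum_sub_distrib, hpsum]
      rw [hRHS]
      apply Finset.sum_le_sum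
      intro s _
      by_cases hps : p s = 0
      · simp only [hps, if_pos, mul_zero, zero_mul, sub_zero, zero_sub]
        have : 0 ≤ q s * Real.exp (l * g s) := mul_nonneg (hq s) (Real.exp_pos _).le
        simp [hps]
        positivity
      · rw [if_neg hps]
        have hps' : 0 < p s := lt_of_le_of_ne (hp s) (Ne.symm hps)
        have hqs : 0 < q s := hsupp s hps
        have hlog : Real.log (q s * Real.exp (l * g s) / p s)
            ≤ q s * Real.exp (l * g s) / p s - 1 :=
          Real.log_le_sub_one_of_pos (by positivity)
        have hexpand : Real.log (q s * Real.exp (l * g s) / p s)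
            = Real.log (q s) + l * g s - Real.log (p s) := by
          rw [Real.log_div (by positivity) hps,
            Real.log_mul (ne_of_gt hqs) (Real.exp_ne_zero _), Real.log_exp]
        rw [hexpand] at hlog
        have hmul := mul_le_mul_of_nonneg_left hlog (hp s)
        have hfield : p s * (q s * Real.exp (l * g s) / p s - 1)
            = q s * Real.exp (l * g s) - p s := by field_simp
        rw [hfield] at hmul
        have hlogpq : Real.log (p s / q s) = Real.log (p s) - Real.log (q s) :=
          Real.log_div hps (ne_of_gt hqs)
        rw [hlogpq]
        nlinarith [hmul]
    linarith [hKL, hMGF, hCM]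
  rcases eq_or_lt_of_le hV0 with hVz | hVpos
  · -- V = 0 case
    have hg0 : ∀ s, p s ≠ 0 → g s = 0 := by
      intro s hps
      have hqs := hsupp s hps
      have hall : ∀ s ∈ univ, 0 ≤ q s * g s ^ 2 :=
        fun s _ => mul_nonneg (hq s) (sq_nonneg _)
      have := (Finset.sum_eq_zero_iff_of_nonneg hall).mp hVz.symm s (mem_univ s)
      have hsq : g s ^ 2 = 0 := by
        rcases mul_eq_zero.mp this with h | h
        · exact absurd h (ne_of_gt hqs)
        · exact h
      exact pow_eq_zero_iff (by norm_num) |>.mp hsq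
    have hpg : ∑ s, p s * g s = 0 := by
      apply Finset.sum_eq_zero
      intro s _
      by_cases hps : p s = 0
      · simp [hps]
      · simp [hg0 s hps]
    rw [hpg]
    positivity
  · -- V > 0 case
    set r := Real.sqrt (V / (2 * α)) with hr
    have hrpos : 0 < r := Real.sqrt_pos.mpr (by positivity)
    have hr2 : r ^ 2 = V / (2 * α) := Real.sq_sqrt (by positivity)
    set l := 1 / (r + b / 2) with hl
    have hden : 0 < r + b / 2 := by linarith
    have hlpos : 0 < l := by positivity
    have hlb : l * b < 2 := by
      rw [hl, div_mul_eq_mul_div, one_mul, div_lt_iff₀ hden]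
      linarith
    have hmain := key l hlpos hlb
    have h2lb : 2 - l * b = 2 * r * l := by
      rw [hl]
      field_simp
      ring
    have hVr : V = 2 * α * r ^ 2 := by
      rw [hr2]; field_simp
    have hpg : ∑ s, p s * g s ≤ α / l + l * V / (2 - l * b) := by
      rw [← sub_nonneg]
      have hcalc : α / l + l * V / (2 - l * b) - (∑ s, p s * g s)
          = (α + l ^ 2 * V / (2 - l * b) - l * (∑ s, p s * g s)) / l := by
        rw [h2lb]
        field_simp
      rw [hcalc]
      apply div_nonneg _ hlpos.le
      linarith [hmain]
    have heval : α / l + l * V / (2 - l * b) = 2 * α * r + α * b / 2 := by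
      rw [h2lb, hl, hVr]
      field_simp
      ring
    have hsqrt : Real.sqrt (2 * V * α) = 2 * α * r := by
      have : 2 * V * α = (2 * α * r) ^ 2 := by rw [hVr]; ring
      rw [this, Real.sqrt_sq (by positivity)]
    rw [hsqrt]
    rw [heval] at hpg
    nlinarith [mul_nonneg hα.le hb]




lemma ereal_coe_sum {S : Type*} (t : Finset S) (f : S → ℝ) :
    ((∑ i ∈ t, f i : ℝ) : EReal) = ∑ i ∈ t, (f i : EReal) := by
  induction t using Finset.cons_induction with
  | empty => simp
  | cons a s ha ih => rw [Finset.sum_cons, Finset.sum_cons, EReal.coe_add, ih]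

/-- Bernstein-type inequality via the KL divergence. If `KL(p,q) ≤ α` then
`|pf − qf| ≤ √(2 Var_q(f) α) + (2/3) b α` for any `f` with values in `[0,b]`. -/
theorem bernstein_via_kl {S : Type*} [Fintype S]
    (p q : S → ℝ) (hp : ∀ s, 0 ≤ p s) (hpsum : ∑ s, p s = 1)
    (hq : ∀ s, 0 ≤ q s) (hqsum : ∑ s, q s = 1)
    (α : ℝ) (hα : 0 < α)
    (b : ℝ) (f : S → ℝ) (hf : ∀ s, 0 ≤ f s ∧ f s ≤ b)
    (hKL : KLdiv p q ≤ (α : EReal)) :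
    |(∑ s, p s * f s) - ∑ s, q s * f s|
      ≤ Real.sqrt (2 * (∑ s, q s * (f s - ∑ s', q s' * f s') ^ 2) * α)
        + 2 / 3 * b * α := by
  classical
  have hsupp : ∀ s, p s ≠ 0 → 0 < q s := by
    intro s₀ hps₀
    by_contra h
    have hq0 : q s₀ = 0 := le_antisymm (not_lt.mp h) (hq s₀)
    set c : S → ℝ := fun s => if p s = 0 then 0 else p s * Real.log (p s / q s) with hc
    have key : ∀ M : ℝ, M + ∑ s ∈ univ.erase s₀, c s ≤ α := by
      intro M
      have hle : ((M + ∑ s ∈ univ.erase s₀, c s : ℝ) : EReal) ≤ (α : EReal) := by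
        refine le_trans ?_ hKL
        rw [KLdiv]
        have hrw : ((M + ∑ s ∈ univ.erase s₀, c s : ℝ) : EReal)
            = ∑ s, (((if s = s₀ then M else c s) : ℝ) : EReal) := by
          rw [← ereal_coe_sum]
          norm_cast
          rw [← Finset.add_sum_erase _ _ (mem_univ s₀), if_pos rfl]
          congr 1
          exact Finset.sum_congr rfl fun s hs => (if_neg (Finset.ne_of_mem_erase hs)).symm
        rw [hrw]
        apply Finset.sum_le_sum
        intro s _
        by_cases h1 : s = s₀
        · subst h1
          rw [if_pos rfl, if_neg hps₀, if_pos hq0]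
          exact le_top
        · rw [if_neg h1]
          by_cases h2 : p s = 0
          · simp [hc, h2]
          · rw [hc]
            simp only [if_neg h2]
            by_cases h3 : q s = 0
            · rw [if_pos h3]; exact le_top
            · rw [if_neg h3]
      exact_mod_cast hle
    have hcontr := key (α - (∑ s ∈ univ.erase s₀, c s) + 1)
    linarith
  have hKLreal : ∑ s, (if p s = 0 then 0 else p s * Real.log (p s / q s)) ≤ α := by
    have heq : KLdiv p q
        = ((∑ s, if p s = 0 then 0 else p s * Real.log (p s / q s) : ℝ) : EReal) := by
      rw [KLdiv, ereal_coe_sum]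
      apply Finset.sum_congr rfl
      intro s _
      by_cases h2 : p s = 0
      · simp [h2]
      · rw [if_neg h2, if_neg (ne_of_gt (hsupp s h2)), if_neg h2]
    rw [heq] at hKL
    exact_mod_cast hKL
  have hne : Nonempty S := by
    by_contra h
    rw [not_nonempty_iff] at h
    rw [Finset.univ_eq_empty, Finset.sum_empty] at hqsum
    norm_num at hqsum
  obtain ⟨s₁⟩ := hne
  have hb : 0 ≤ b := le_trans (hf s₁).1 (hf s₁).2
  set T := ∑ s', q s' * f s' with hT
  have hT0 : 0 ≤ T := Finset.sum_nonneg fun s _ => mul_nonneg (hq s) (hf s).1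
  have hTb : T ≤ b := by
    calc T ≤ ∑ s, q s * b :=
        Finset.sum_le_sum fun s _ => mul_le_mul_of_nonneg_left (hf s).2 (hq s)
      _ = b := by rw [← Finset.sum_mul, hqsum, one_mul]
  rw [abs_sub_le_iff]
  constructor
  · have h1 := one_sided_bernstein p q hp hpsum hq hqsum hsupp α hα hKLreal b hb
      (fun s => f s - T)
      (fun s => show f s - T ≤ b by linarith [(hf s).2, hT0])
      (by simp only [mul_sub, Finset.sum_sub_distrib, ← Finset.sum_mul, hqsum, one_mul, ← hT,
            sub_self])
    have hps : ∑ s, p s * (f s - T) = (∑ s, p s * f s) - T := by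
      simp only [mul_sub, Finset.sum_sub_distrib, ← Finset.sum_mul, hpsum, one_mul]
    rw [hps] at h1
    exact h1
  · have h2 := one_sided_bernstein p q hp hpsum hq hqsum hsupp α hα hKLreal b hb
      (fun s => T - f s)
      (fun s => show T - f s ≤ b by linarith [(hf s).1, hTb])
      (by simp only [mul_sub, Finset.sum_sub_distrib, ← Finset.sum_mul, hqsum, one_mul, ← hT,
            sub_self])
    have hps : ∑ s, p s * (T - f s) = T - ∑ s, p s * f s := by
      simp only [mul_sub, Finset.sum_sub_distrib, ← Finset.sum_mul, hpsum, one_mul]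
    have hvar : ∑ s, q s * (T - f s) ^ 2 = ∑ s, q s * (f s - T) ^ 2 :=
      Finset.sum_congr rfl fun s _ => by ring
    rw [hps, hvar] at h2
    exact h2
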